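/- Let B be an m×m symmetric positive-definite real matrix and e₁ the first standard basis vector of ℝ^m. Then the function f(v) := vᵀ B v − 2 log(v₁) on the set {v ∈ ℝ^m : v₁ > 0} attains a unique global minimum at v* := B⁻¹ e₁ / √(e₁ᵀ B⁻¹ e₁), and the minimal value is f(v*) = 1 − log(e₁ᵀ B⁻¹ e₁). -/

import Mathlib

open Matrix

noncomputable section

/-- The optimizer `v* = B⁻¹ e₁ / √(e₁ᵀ B⁻¹ e₁)`. -/
def optVec {m : ℕ} [NeZero m] (B : Matrix (Fin m) (Fin m) ℝ) : Fin m → ℝ :=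
  fun i => (B⁻¹ *ᵥ Pi.single (0 : Fin m) 1) i /
    Real.sqrt (Pi.single (0 : Fin m) 1 ⬝ᵥ (B⁻¹ *ᵥ Pi.single (0 : Fin m) 1))

/-- The objective `f(v) = vᵀ B v − 2 log v₁`. -/
def objFun {m : ℕ} [NeZero m] (B : Matrix (Fin m) (Fin m) ℝ) (v : Fin m → ℝ) : ℝ :=
  v ⬝ᵥ (B *ᵥ v) - 2 * Real.log (v 0)

/-- For `B` symmetric positive definite, the function
`f(v) = vᵀ B v − 2 log v₁` on `{v : v₁ > 0}` attains a unique global minimum at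
`v* = B⁻¹ e₁ / √(e₁ᵀ B⁻¹ e₁)`, with minimal value `f(v*) = 1 − log(e₁ᵀ B⁻¹ e₁)`. -/
theorem objFun_unique_min {m : ℕ} [NeZero m]
    (B : Matrix (Fin m) (Fin m) ℝ) (hB : B.PosDef) :
    0 < optVec B 0 ∧
    objFun B (optVec B) =
      1 - Real.log (Pi.single (0 : Fin m) 1 ⬝ᵥ (B⁻¹ *ᵥ Pi.single (0 : Fin m) 1)) ∧
    ∀ v : Fin m → ℝ, 0 < v 0 →
      (objFun B (optVec B) ≤ objFun B v ∧
        (objFun B v = objFun B (optVec B) → v = optVec B)) := by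
  classical
  set e : Fin m → ℝ := Pi.single (0 : Fin m) 1 with he
  set w : Fin m → ℝ := B⁻¹ *ᵥ e with hwdef
  set c : ℝ := e ⬝ᵥ w with hcdef
  have hesz : e ≠ 0 := by
    intro h
    have := congrFun h 0
    simp [he] at this
  have hBinv : (B⁻¹).PosDef := hB.inv
  have hc : 0 < c := by
    have := hBinv.dotProduct_mulVec_pos hesz
    simpa [hcdef, hwdef] using this
  have hsc : 0 < Real.sqrt c := Real.sqrt_pos.2 hc
  have hscsq : Real.sqrt c * Real.sqrt c = c := Real.mul_self_sqrt hc.le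
  have hBw : B *ᵥ w = e := by
    rw [hwdef, mulVec_mulVec, mul_nonsing_inv _ hB.det_pos.ne'.isUnit, one_mulVec]
  have hw0 : w 0 = c := by
    rw [hcdef, he, single_dotProduct, one_mul]
  -- symmetry of the bilinear form
  have hBt : Bᵀ = B := by
    ext i j
    have := congrFun (congrFun hB.1 i) j
    simpa using this
  have hsym : ∀ x y : Fin m → ℝ, x ⬝ᵥ (B *ᵥ y) = y ⬝ᵥ (B *ᵥ x) := by
    intro x y
    rw [dotProduct_mulVec, ← mulVec_transpose, hBt, dotProduct_comm]
  -- optVec as scalar multiple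
  have hov : optVec B = (Real.sqrt c)⁻¹ • w := by
    funext i
    simp [optVec, hwdef, he, hcdef, smul_eq_mul, div_eq_inv_mul, mul_comm]
  have hov0 : optVec B 0 = Real.sqrt c := by
    rw [hov]
    simp only [Pi.smul_apply, smul_eq_mul, hw0]
    field_simp
    rw [Real.sq_sqrt hc.le]
  -- quadratic form at optVec equals 1
  have hq : optVec B ⬝ᵥ (B *ᵥ optVec B) = 1 := by
    rw [hov, smul_dotProduct, mulVec_smul, dotProduct_smul]
    have hwBw : w ⬝ᵥ (B *ᵥ w) = c := by
      rw [hBw, dotProduct_comm, hcdef]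
    rw [hwBw]
    simp only [smul_eq_mul]
    field_simp
    rw [Real.sq_sqrt hc.le]
  have hval : objFun B (optVec B) = 1 - Real.log c := by
    rw [objFun, hq, hov0, Real.log_sqrt hc.le]
    ring
  refine ⟨hov0 ▸ hsc, hval, ?_⟩
  intro v hv
  -- key decomposition with u = v - optVec B
  set u : Fin m → ℝ := v - optVec B with hu
  have hvdec : v = optVec B + u := by simp [hu]
  have hBov : B *ᵥ optVec B = (Real.sqrt c)⁻¹ • e := by
    rw [hov, mulVec_smul, hBw]
  have hcross : u ⬝ᵥ (B *ᵥ optVec B) = (Real.sqrt c)⁻¹ * u 0 := by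
    rw [hBov, dotProduct_smul, he, smul_eq_mul, dotProduct_single, mul_one]
  have hexpand : v ⬝ᵥ (B *ᵥ v)
      = 1 + 2 * ((Real.sqrt c)⁻¹ * u 0) + u ⬝ᵥ (B *ᵥ u) := by
    rw [hvdec, add_dotProduct, mulVec_add, dotProduct_add, dotProduct_add, hq,
      hsym (optVec B) u, hcross]
    ring
  have hu0 : u 0 = v 0 - Real.sqrt c := by rw [hu]; simp [hov0]
  -- log inequality: log(v0) ≤ log √c + (v0 - √c)/√c, strict unless v0 = √c
  have hlog : Real.log (v 0) - Real.log (Real.sqrt c) ≤ (v 0 - Real.sqrt c) / Real.sqrt c := by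
    rw [← Real.log_div hv.ne' hsc.ne']
    have := Real.log_le_sub_one_of_pos (div_pos hv hsc)
    calc Real.log (v 0 / Real.sqrt c) ≤ v 0 / Real.sqrt c - 1 := this
      _ = (v 0 - Real.sqrt c) / Real.sqrt c := by field_simp
  have hquadnn : 0 ≤ u ⬝ᵥ (B *ᵥ u) := by
    rcases eq_or_ne u 0 with h | h
    · simp [h]
    · have := hB.dotProduct_mulVec_pos h
      simpa using this.le
  have hkey : objFun B v = objFun B (optVec B) + u ⬝ᵥ (B *ᵥ u)
      + 2 * ((v 0 - Real.sqrt c) / Real.sqrt c - (Real.log (v 0) - Real.log (Real.sqrt c))) := by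
    rw [objFun, hexpand, hval, hu0, Real.log_sqrt hc.le]
    field_simp
    ring
  have hlognn : 0 ≤ (v 0 - Real.sqrt c) / Real.sqrt c - (Real.log (v 0) - Real.log (Real.sqrt c)) := by
    linarith [hlog]
  constructor
  · rw [hkey]; linarith
  · intro heq
    by_contra hne
    have hune : u ≠ 0 := by
      intro h0
      apply hne
      have : v = optVec B + 0 := h0 ▸ hvdec
      simpa using this
    have hpos : 0 < u ⬝ᵥ (B *ᵥ u) := by
      have := hB.dotProduct_mulVec_pos hune
      simpa using this
    rw [hkey] at heq
    linarith

end
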